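/- For every natural number m, the coefficient of x^m in the power series expansion of 1/((1-x)(1-x²)(1-x³)) equals ⌊(m² + 6m + 12)/12⌋. -/

import Mathlib

open PowerSeries

noncomputable def g : ℚ⟦X⟧ := PowerSeries.mk (fun m => ((m ^ 2 + 6 * m + 12) / 12 : ℕ))

lemma ashift (m : ℕ) : ((m+12) ^ 2 + 6 * (m+12) + 12) / 12 = (m ^ 2 + 6 * m + 12) / 12 + (2*m + 18) := by
  have h : (m+12)^2 + 6*(m+12) + 12 = (m^2 + 6*m + 12) + 12*(2*m+18) := by ring
  rw [h]; omega

lemma akey (m : ℕ) : (((m+6) ^ 2 + 6 * (m+6) + 12) / 12 : ℕ) + ((m+2) ^ 2 + 6 * (m+2) + 12) / 12 + ((m+1) ^ 2 + 6 * (m+1) + 12) / 12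
    = ((m+5) ^ 2 + 6 * (m+5) + 12) / 12 + ((m+4) ^ 2 + 6 * (m+4) + 12) / 12 + (m ^ 2 + 6 * m + 12) / 12 := by
  induction m using Nat.strong_induction_on with
  | _ m ih =>
    rcases Nat.lt_or_ge m 12 with h | h
    · interval_cases m <;> decide
    · obtain ⟨k, rfl⟩ : ∃ k, m = k + 12 := ⟨m - 12, by omega⟩
      have hk := ih k (by omega)
      have s0 := ashift k
      have s1 := ashift (k+1)
      have s2 := ashift (k+2)
      have s4 := ashift (k+4)
      have s5 := ashift (k+5)
      have s6 := ashift (k+6)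
      have r6 : k + 12 + 6 = (k+6) + 12 := by omega
      have r5 : k + 12 + 5 = (k+5) + 12 := by omega
      have r4 : k + 12 + 4 = (k+4) + 12 := by omega
      have r2 : k + 12 + 2 = (k+2) + 12 := by omega
      have r1 : k + 12 + 1 = (k+1) + 12 := by omega
      rw [r6, r5, r4, r2, r1, s0, s1, s2, s4, s5, s6]
      omega

lemma gmul : g * ((1 - PowerSeries.X) * (1 - PowerSeries.X ^ 2) * (1 - PowerSeries.X ^ 3)) = 1 := by
  have hP : ((1 - PowerSeries.X) * (1 - PowerSeries.X ^ 2) * (1 - PowerSeries.X ^ 3) : ℚ⟦X⟧)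
      = 1 - X^1 - X^2 + X^4 + X^5 - X^6 := by ring
  rw [hP]
  ext n
  have key : ∀ k d : ℕ, (coeff (R := ℚ) (d + k)) (g * X ^ k)
      = ((d ^ 2 + 6 * d + 12) / 12 : ℕ) := by
    intro k d
    rw [coeff_mul_X_pow]
    simp [g]
  simp only [mul_sub, mul_add, mul_one, map_sub, map_add, coeff_one]
  rcases Nat.lt_or_ge n 6 with h | h
  · interval_cases n <;> simp [coeff_mul_X_pow', g] <;> norm_num
  · obtain ⟨m, rfl⟩ : ∃ m, n = m + 6 := ⟨n - 6, by omega⟩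
    have e1 := key 1 (m+5); have e2 := key 2 (m+4); have e4 := key 4 (m+2)
    have e5 := key 5 (m+1); have e6 := key 6 m
    have e0 : (coeff (R := ℚ) (m+6)) g = (((m+6) ^ 2 + 6 * (m+6) + 12) / 12 : ℕ) := by simp [g]
    rw [show m+5+1 = m+6 from rfl] at e1
    rw [show m+4+2 = m+6 from rfl] at e2
    rw [show m+2+4 = m+6 from rfl] at e4
    rw [show m+1+5 = m+6 from rfl] at e5
    rw [e0, e1, e2, e4, e5, e6, if_neg (by omega : ¬ m + 6 = 0)]
    have hc : ((((m+6) ^ 2 + 6 * (m+6) + 12) / 12 : ℕ) : ℚ)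
        + (((m+2) ^ 2 + 6 * (m+2) + 12) / 12 : ℕ) + (((m+1) ^ 2 + 6 * (m+1) + 12) / 12 : ℕ)
        = (((m+5) ^ 2 + 6 * (m+5) + 12) / 12 : ℕ) + (((m+4) ^ 2 + 6 * (m+4) + 12) / 12 : ℕ)
        + ((m ^ 2 + 6 * m + 12) / 12 : ℕ) := by exact_mod_cast akey m
    linarith

/-- The coefficient of `x^m` in the power series expansion of
`1/((1-x)(1-x²)(1-x³))` equals `⌊(m² + 6m + 12)/12⌋`. -/
theorem coeff_inv_one_sub_prod (m : ℕ) :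
    PowerSeries.coeff (R := ℚ) m
      (((1 - PowerSeries.X) * (1 - PowerSeries.X ^ 2) * (1 - PowerSeries.X ^ 3))⁻¹)
      = ((m ^ 2 + 6 * m + 12) / 12 : ℕ) := by
  have hc : constantCoeff (R := ℚ) ((1 - PowerSeries.X) * (1 - PowerSeries.X ^ 2) * (1 - PowerSeries.X ^ 3)) ≠ 0 := by
    simp [constantCoeff_X]
  have h := (PowerSeries.inv_eq_iff_mul_eq_one hc).mpr gmul
  rw [h]
  simp [g]
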